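/- Every 3-way (v,3,2) trade of volume 7 is a Steiner trade; that is, in such a trade no pair of elements x, y of the foundation satisfies λ_{xy} ≥ 2. -/

import Mathlib

/-- The blocks of a collection `Ti` that contain a given subset `S`. -/
def blocksContaining (Ti : Finset (Finset ℕ)) (S : Finset ℕ) : Finset (Finset ℕ) :=
  Ti.filter (fun B => S ⊆ B)

/-- `T` is a μ-way (v,k,t) trade of volume `m` with point set `V`:
μ pairwise disjoint collections, each of `m` k-subsets of the v-set `V`,
such that every t-subset of `V` is contained in the same number of blocks
of each collection. -/
structure IsTrade (μ v k t m : ℕ) (V : Finset ℕ) (T : Fin μ → Finset (Finset ℕ)) : Prop where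
  cardV : V.card = v
  volume : ∀ i, (T i).card = m
  blockSub : ∀ i, ∀ B ∈ T i, B ⊆ V
  blockCard : ∀ i, ∀ B ∈ T i, B.card = k
  disj : ∀ i j, i ≠ j → Disjoint (T i) (T j)
  balanced : ∀ S : Finset ℕ, S.card = t → ∀ i j,
    (blocksContaining (T i) S).card = (blocksContaining (T j) S).card

/-- A μ-way (v,k,t) Steiner trade: a trade in which every t-subset occurs
at most once in each collection. -/
def IsSteinerTrade (μ v k t m : ℕ) (V : Finset ℕ) (T : Fin μ → Finset (Finset ℕ)) : Prop :=
  IsTrade μ v k t m V T ∧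
  ∀ S : Finset ℕ, S.card = t → ∀ i, (blocksContaining (T i) S).card ≤ 1

/-- The foundation of a μ-way trade: the union of all its blocks. -/
def foundation {μ : ℕ} (T : Fin μ → Finset (Finset ℕ)) : Finset ℕ :=
  Finset.univ.biUnion (fun i => (T i).biUnion id)

/-- `T` is t-solely balanced: no two distinct collections contain a common
(t+1)-subset. -/
def SolelyBalanced {μ : ℕ} (t : ℕ) (T : Fin μ → Finset (Finset ℕ)) : Prop :=
  ∀ i j : Fin μ, i ≠ j → ∀ S : Finset ℕ, S.card = t + 1 →
    ¬ ((∃ B ∈ T i, S ⊆ B) ∧ (∃ B ∈ T j, S ⊆ B))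

namespace Vol7Aux
open Finset

lemma pair_card {a b : ℕ} (h : a ≠ b) : ({a, b} : Finset ℕ).card = 2 := by
  rw [card_insert_of_notMem (by simp [h])]; rfl

lemma blocksContaining_pair (Ti : Finset (Finset ℕ)) (a b : ℕ) :
    blocksContaining Ti {a, b} = Ti.filter (fun B => a ∈ B ∧ b ∈ B) := by
  apply filter_congr
  intro B _
  simp [insert_subset_iff]

lemma triple_card {a b c : ℕ} (hab : a ≠ b) (hac : a ≠ c) (hbc : b ≠ c) :
    ({a, b, c} : Finset ℕ).card = 3 := by
  rw [card_insert_of_notMem (by simp [hab, hac]), card_insert_of_notMem (by simp [hbc])]; rfl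

lemma eq_triple {B : Finset ℕ} {a b c : ℕ} (hB : B.card = 3) (ha : a ∈ B) (hb : b ∈ B)
    (hc : c ∈ B) (hab : a ≠ b) (hac : a ≠ c) (hbc : b ≠ c) : B = {a, b, c} := by
  symm
  apply eq_of_subset_of_card_le
  · intro z hz
    simp only [mem_insert, mem_singleton] at hz
    rcases hz with rfl | rfl | rfl <;> assumption
  · rw [hB, triple_card hab hac hbc]

lemma no_four {B : Finset ℕ} {a b c d : ℕ} (hB : B.card = 3) (ha : a ∈ B) (hb : b ∈ B)
    (hc : c ∈ B) (hd : d ∈ B) (hab : a ≠ b) (hac : a ≠ c) (had : a ≠ d) (hbc : b ≠ c)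
    (hbd : b ≠ d) (hcd : c ≠ d) : False := by
  have hsub : ({a, b, c, d} : Finset ℕ) ⊆ B := by
    intro z hz
    simp only [mem_insert, mem_singleton] at hz
    rcases hz with rfl | rfl | rfl | rfl <;> assumption
  have h4 : ({a, b, c, d} : Finset ℕ).card = 4 := by
    rw [card_insert_of_notMem (by simp [hab, hac, had]),
      card_insert_of_notMem (by simp [hbc, hbd]), card_insert_of_notMem (by simp [hcd])]
    rfl
  have := card_le_card hsub
  omega

/-- The set of "third points" of blocks of `Ti` containing both `x` and `y`. -/
def Z (Ti : Finset (Finset ℕ)) (x y : ℕ) : Finset ℕ :=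
  (Ti.filter (fun B => x ∈ B ∧ y ∈ B)).biUnion (fun B => (B.erase x).erase y)

lemma mem_Z {Ti : Finset (Finset ℕ)} {x y z : ℕ} :
    z ∈ Z Ti x y ↔ ∃ B ∈ Ti, x ∈ B ∧ y ∈ B ∧ z ∈ B ∧ z ≠ x ∧ z ≠ y := by
  simp only [Z, mem_biUnion, mem_filter, mem_erase]
  tauto

lemma Z_comm (Ti : Finset (Finset ℕ)) (x y : ℕ) : Z Ti x y = Z Ti y x := by
  ext z
  rw [mem_Z, mem_Z]
  tauto

lemma x_not_mem_Z {Ti : Finset (Finset ℕ)} {x y : ℕ} : x ∉ Z Ti x y := by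
  rw [mem_Z]; rintro ⟨B, _, _, _, _, h, _⟩; exact h rfl

lemma y_not_mem_Z {Ti : Finset (Finset ℕ)} {x y : ℕ} : y ∉ Z Ti x y := by
  rw [mem_Z]; rintro ⟨B, _, _, _, _, _, h⟩; exact h rfl

lemma Z_block {Ti : Finset (Finset ℕ)} {x y z : ℕ} (hk : ∀ B ∈ Ti, B.card = 3)
    (hxy : x ≠ y) (hz : z ∈ Z Ti x y) : ({x, y, z} : Finset ℕ) ∈ Ti := by
  rw [mem_Z] at hz
  obtain ⟨B, hB, hx, hy, hzB, hzx, hzy⟩ := hz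
  have := eq_triple (hk B hB) hx hy hzB hxy (Ne.symm hzx) (Ne.symm hzy)
  rwa [← this]

lemma Z_card {Ti : Finset (Finset ℕ)} {x y : ℕ} (hk : ∀ B ∈ Ti, B.card = 3) (hxy : x ≠ y) :
    (Z Ti x y).card = (Ti.filter (fun B => x ∈ B ∧ y ∈ B)).card := by
  rw [Z, card_biUnion]
  · have : ∀ B ∈ Ti.filter (fun B => x ∈ B ∧ y ∈ B), ((B.erase x).erase y).card = 1 := by
      intro B hB
      rw [mem_filter] at hB
      have h3 := hk B hB.1
      rw [card_erase_of_mem (mem_erase.2 ⟨Ne.symm hxy, hB.2.2⟩), card_erase_of_mem hB.2.1, h3]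
    rw [sum_congr rfl this, ← card_eq_sum_ones]
  · intro B1 h1 B2 h2 hne
    rw [mem_coe, mem_filter] at h1 h2
    rw [Function.onFun, Finset.disjoint_left]
    intro z hz1 hz2
    rw [mem_erase, mem_erase] at hz1 hz2
    have e1 := eq_triple (hk B1 h1.1) h1.2.1 h1.2.2 hz1.2.2 hxy (Ne.symm hz1.2.1) (Ne.symm hz1.1)
    have e2 := eq_triple (hk B2 h2.1) h2.2.1 h2.2.2 hz2.2.2 hxy (Ne.symm hz2.2.1) (Ne.symm hz2.1)
    exact hne (e1.trans e2.symm)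

variable {v : ℕ} {V : Finset ℕ} {T : Fin 3 → Finset (Finset ℕ)}

/-- Pair balance, in filter form. -/
lemma bal (hT : IsTrade 3 v 3 2 7 V T) {a b : ℕ} (hab : a ≠ b) (i j : Fin 3) :
    ((T i).filter (fun B => a ∈ B ∧ b ∈ B)).card =
      ((T j).filter (fun B => a ∈ B ∧ b ∈ B)).card := by
  have := hT.balanced {a, b} (pair_card hab) i j
  rwa [blocksContaining_pair, blocksContaining_pair] at this

lemma filter_and_comm (s : Finset (Finset ℕ)) (p q : Finset ℕ → Prop)
    [DecidablePred p] [DecidablePred q] :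
    s.filter (fun B => p B ∧ q B) = s.filter (fun B => q B ∧ p B) :=
  filter_congr (fun B _ => and_comm)

/-- Coverage: if z is a third point for {x,y} in T j, then T i has a block with x, z, not y. -/
lemma cover (hT : IsTrade 3 v 3 2 7 V T) {x y : ℕ} (hxy : x ≠ y) {i j : Fin 3} (hij : i ≠ j)
    {z : ℕ} (hz : z ∈ Z (T j) x y) : ∃ B ∈ T i, x ∈ B ∧ y ∉ B ∧ z ∈ B := by
  obtain ⟨A, hA, hAx, hAy, hAz, hzx, hzy⟩ := mem_Z.1 hz
  have hblk : ({x, y, z} : Finset ℕ) ∈ T j := Z_block (hT.blockCard j) hxy hz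
  have hb := bal hT (Ne.symm hzx) i j
  have hpos : 0 < ((T j).filter (fun B => x ∈ B ∧ z ∈ B)).card := by
    apply card_pos.2
    exact ⟨{x, y, z}, mem_filter.2 ⟨hblk, by simp, by simp⟩⟩
  rw [← hb] at hpos
  obtain ⟨B, hB⟩ := card_pos.1 hpos
  rw [mem_filter] at hB
  refine ⟨B, hB.1, hB.2.1, ?_, hB.2.2⟩
  intro hy
  have hBe : B = ({x, y, z} : Finset ℕ) :=
    eq_triple (hT.blockCard i B hB.1) hB.2.1 hy hB.2.2 hxy (Ne.symm hzx) (Ne.symm hzy)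
  have : B ∈ T j := hBe ▸ hblk
  exact (Finset.disjoint_left.1 (hT.disj i j hij)) hB.1 this

lemma Z_disj (hT : IsTrade 3 v 3 2 7 V T) {x y : ℕ} (hxy : x ≠ y) {i j : Fin 3} (hij : i ≠ j) :
    Disjoint (Z (T i) x y) (Z (T j) x y) := by
  rw [Finset.disjoint_left]
  intro z hzi hzj
  have h1 : ({x, y, z} : Finset ℕ) ∈ T i := Z_block (hT.blockCard i) hxy hzi
  have h2 : ({x, y, z} : Finset ℕ) ∈ T j := Z_block (hT.blockCard j) hxy hzj
  exact (Finset.disjoint_left.1 (hT.disj i j hij)) h1 h2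

/-- The counting bound: 2 λ ≤ 2 p. -/
lemma lower (hT : IsTrade 3 v 3 2 7 V T) {x y : ℕ} (hxy : x ≠ y) {i j k : Fin 3}
    (hij : i ≠ j) (hik : i ≠ k) (hjk : j ≠ k) :
    ((T j).filter (fun B => x ∈ B ∧ y ∈ B)).card +
      ((T k).filter (fun B => x ∈ B ∧ y ∈ B)).card ≤
      2 * ((T i).filter (fun B => x ∈ B ∧ y ∉ B)).card := by
  have hsub : Z (T j) x y ∪ Z (T k) x y ⊆
      ((T i).filter (fun B => x ∈ B ∧ y ∉ B)).biUnion (fun B => B.erase x) := by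
    intro z hz
    rw [mem_union] at hz
    have : ∃ B ∈ T i, x ∈ B ∧ y ∉ B ∧ z ∈ B := by
      rcases hz with hz | hz
      · exact cover hT hxy hij hz
      · exact cover hT hxy hik hz
    obtain ⟨B, hB, hx, hy, hzB⟩ := this
    have hzx : z ≠ x := by
      rintro rfl
      rcases hz with hz | hz <;> exact x_not_mem_Z hz
    exact mem_biUnion.2 ⟨B, mem_filter.2 ⟨hB, hx, hy⟩, mem_erase.2 ⟨hzx, hzB⟩⟩
  have h1 := card_le_card hsub
  have h2 : (Z (T j) x y ∪ Z (T k) x y).card =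
      ((T j).filter (fun B => x ∈ B ∧ y ∈ B)).card +
        ((T k).filter (fun B => x ∈ B ∧ y ∈ B)).card := by
    rw [card_union_of_disjoint (Z_disj hT hxy hjk), Z_card (hT.blockCard j) hxy,
      Z_card (hT.blockCard k) hxy]
  have h3 : (((T i).filter (fun B => x ∈ B ∧ y ∉ B)).biUnion (fun B => B.erase x)).card ≤
      2 * ((T i).filter (fun B => x ∈ B ∧ y ∉ B)).card := by
    calc (((T i).filter (fun B => x ∈ B ∧ y ∉ B)).biUnion (fun B => B.erase x)).card
        ≤ ∑ B ∈ (T i).filter (fun B => x ∈ B ∧ y ∉ B), (B.erase x).card :=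
          card_biUnion_le
      _ ≤ ∑ B ∈ (T i).filter (fun B => x ∈ B ∧ y ∉ B), 2 := by
          apply sum_le_sum
          intro B hB
          rw [mem_filter] at hB
          rw [card_erase_of_mem hB.2.1, hT.blockCard i B hB.1]
      _ = 2 * ((T i).filter (fun B => x ∈ B ∧ y ∉ B)).card := by
          rw [sum_const, smul_eq_mul, mul_comm]
  omega

/-- Degree of a point is the same in each collection. -/
lemma deg_eq (hT : IsTrade 3 v 3 2 7 V T) (x : ℕ) (i j : Fin 3) :
    ((T i).filter (fun B => x ∈ B)).card = ((T j).filter (fun B => x ∈ B)).card := by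
  have key : ∀ m : Fin 3, ∑ w ∈ V.erase x, ((T m).filter (fun B => x ∈ B ∧ w ∈ B)).card
      = 2 * ((T m).filter (fun B => x ∈ B)).card := by
    intro m
    calc ∑ w ∈ V.erase x, ((T m).filter (fun B => x ∈ B ∧ w ∈ B)).card
        = ∑ w ∈ V.erase x, ∑ B ∈ T m, if x ∈ B ∧ w ∈ B then 1 else 0 := by
          exact sum_congr rfl (fun w _ => card_filter _ _)
      _ = ∑ B ∈ T m, ∑ w ∈ V.erase x, if x ∈ B ∧ w ∈ B then 1 else 0 := sum_comm
      _ = ∑ B ∈ T m, if x ∈ B then 2 else 0 := by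
          apply sum_congr rfl
          intro B hB
          by_cases hx : x ∈ B
          · simp only [hx, true_and, if_true]
            have : ∑ w ∈ V.erase x, (if w ∈ B then 1 else 0) =
                ((V.erase x).filter (fun w => w ∈ B)).card := (card_filter _ _).symm
            rw [this]
            have heq : (V.erase x).filter (fun w => w ∈ B) = B.erase x := by
              ext w
              simp only [mem_filter, mem_erase]
              constructor
              · rintro ⟨⟨h1, _⟩, h2⟩; exact ⟨h1, h2⟩
              · rintro ⟨h1, h2⟩; exact ⟨⟨h1, hT.blockSub m B hB h2⟩, h2⟩
            rw [heq, card_erase_of_mem hx, hT.blockCard m B hB]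
          · simp [hx]
      _ = 2 * ((T m).filter (fun B => x ∈ B)).card := by
          rw [card_filter]
          rw [mul_sum]
          apply sum_congr rfl
          intro B _
          by_cases hx : x ∈ B <;> simp [hx]
  have hsum : ∑ w ∈ V.erase x, ((T i).filter (fun B => x ∈ B ∧ w ∈ B)).card
      = ∑ w ∈ V.erase x, ((T j).filter (fun B => x ∈ B ∧ w ∈ B)).card := by
    apply sum_congr rfl
    intro w hw
    have hwx : x ≠ w := (mem_erase.1 hw).1.symm
    exact bal hT hwx i j
  have hi := key i
  have hj := key j
  rw [hsum] at hi
  omega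

/-- Split the blocks containing x by whether they contain y. -/
lemma split_x (s : Finset (Finset ℕ)) (x y : ℕ) :
    (s.filter (fun B => x ∈ B ∧ y ∈ B)).card + (s.filter (fun B => x ∈ B ∧ y ∉ B)).card
      = (s.filter (fun B => x ∈ B)).card := by
  have := card_filter_add_card_filter_not
    (s := s.filter (fun B => x ∈ B)) (p := fun B => y ∈ B)
  rw [filter_filter, filter_filter] at this
  exact this

lemma partition4 (s : Finset (Finset ℕ)) (x y : ℕ) :
    (s.filter (fun B => x ∈ B ∧ y ∈ B)).card + (s.filter (fun B => x ∈ B ∧ y ∉ B)).card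
    + (s.filter (fun B => x ∉ B ∧ y ∈ B)).card + (s.filter (fun B => x ∉ B ∧ y ∉ B)).card
    = s.card := by
  have h1 := split_x s x y
  have h2 : (s.filter (fun B => x ∉ B ∧ y ∈ B)).card +
      (s.filter (fun B => x ∉ B ∧ y ∉ B)).card = (s.filter (fun B => x ∉ B)).card := by
    have := card_filter_add_card_filter_not
      (s := s.filter (fun B => x ∉ B)) (p := fun B => y ∈ B)
    rw [filter_filter, filter_filter] at this
    exact this
  have h3 := card_filter_add_card_filter_not (s := s) (p := fun B => x ∈ B)
  omega

/-- Structure of the x-blocks when p = 2: their non-x points partition Z_j ∪ Z_k. -/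
lemma struct (hT : IsTrade 3 v 3 2 7 V T) {x y : ℕ} (hxy : x ≠ y)
    (hr : ∀ i, ((T i).filter (fun B => x ∈ B ∧ y ∈ B)).card = 2)
    (hp : ∀ i, ((T i).filter (fun B => x ∈ B ∧ y ∉ B)).card = 2)
    {i j k : Fin 3} (hij : i ≠ j) (hik : i ≠ k) (hjk : j ≠ k) :
    ∃ B1 B2 : Finset ℕ, B1 ≠ B2 ∧
      (T i).filter (fun B => x ∈ B ∧ y ∉ B) = {B1, B2} ∧
      Disjoint (B1.erase x) (B2.erase x) ∧
      B1.erase x ∪ B2.erase x = Z (T j) x y ∪ Z (T k) x y ∧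
      (B1.erase x).card = 2 ∧ (B2.erase x).card = 2 := by
  obtain ⟨B1, B2, hne, hPx⟩ := card_eq_two.1 (hp i)
  have hB1 : B1 ∈ (T i).filter (fun B => x ∈ B ∧ y ∉ B) := by rw [hPx]; simp
  have hB2 : B2 ∈ (T i).filter (fun B => x ∈ B ∧ y ∉ B) := by rw [hPx]; simp
  rw [mem_filter] at hB1 hB2
  have hc1 : (B1.erase x).card = 2 := by
    rw [card_erase_of_mem hB1.2.1, hT.blockCard i B1 hB1.1]
  have hc2 : (B2.erase x).card = 2 := by
    rw [card_erase_of_mem hB2.2.1, hT.blockCard i B2 hB2.1]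
  -- Z_j ∪ Z_k ⊆ e1 ∪ e2
  have hsub : Z (T j) x y ∪ Z (T k) x y ⊆ B1.erase x ∪ B2.erase x := by
    intro z hz
    rw [mem_union] at hz
    have hex : ∃ B ∈ T i, x ∈ B ∧ y ∉ B ∧ z ∈ B := by
      rcases hz with hz | hz
      · exact cover hT hxy hij hz
      · exact cover hT hxy hik hz
    obtain ⟨B, hB, hx, hy, hzB⟩ := hex
    have hzx : z ≠ x := by
      rintro rfl
      rcases hz with hz | hz <;> exact x_not_mem_Z hz
    have : B ∈ ({B1, B2} : Finset (Finset ℕ)) := by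
      rw [← hPx]; exact mem_filter.2 ⟨hB, hx, hy⟩
    rw [mem_insert, mem_singleton] at this
    rcases this with rfl | rfl
    · exact mem_union_left _ (mem_erase.2 ⟨hzx, hzB⟩)
    · exact mem_union_right _ (mem_erase.2 ⟨hzx, hzB⟩)
  have hZZcard : (Z (T j) x y ∪ Z (T k) x y).card = 4 := by
    rw [card_union_of_disjoint (Z_disj hT hxy hjk), Z_card (hT.blockCard j) hxy,
      Z_card (hT.blockCard k) hxy, hr j, hr k]
  have hUle := card_union_le (B1.erase x) (B2.erase x)
  have hUge := card_le_card hsub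
  have hUeq : B1.erase x ∪ B2.erase x = Z (T j) x y ∪ Z (T k) x y := by
    symm
    apply eq_of_subset_of_card_le hsub
    omega
  have hinter := card_union_add_card_inter (B1.erase x) (B2.erase x)
  have hU4 : (B1.erase x ∪ B2.erase x).card = 4 := by rw [hUeq, hZZcard]
  have hdisj : Disjoint (B1.erase x) (B2.erase x) := by
    rw [Finset.disjoint_iff_inter_eq_empty, ← card_eq_zero]
    omega
  exact ⟨B1, B2, hne, hPx, hdisj, hUeq, hc1, hc2⟩

/-- Witness lemma: a mixed pair (u from Z_j, w from Z_k) appearing in a block of T i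
must appear in T j in a block avoiding x; if it contains y it is {y,u,w}. -/
lemma wit (hT : IsTrade 3 v 3 2 7 V T) {x y : ℕ} (hxy : x ≠ y)
    (hr : ∀ i, ((T i).filter (fun B => x ∈ B ∧ y ∈ B)).card = 2)
    (hp : ∀ i, ((T i).filter (fun B => x ∈ B ∧ y ∉ B)).card = 2)
    {i j k : Fin 3} (hij : i ≠ j) (hik : i ≠ k) (hjk : j ≠ k)
    {u w : ℕ} (hu : u ∈ Z (T j) x y) (hw : w ∈ Z (T k) x y)
    (hB : ∃ B ∈ T i, u ∈ B ∧ w ∈ B) :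
    ∃ C ∈ T j, u ∈ C ∧ w ∈ C ∧ x ∉ C ∧ (y ∈ C → C = {y, u, w}) := by
  obtain ⟨hux, huy⟩ : u ≠ x ∧ u ≠ y := by
    obtain ⟨_, _, _, _, _, h1, h2⟩ := mem_Z.1 hu; exact ⟨h1, h2⟩
  obtain ⟨hwx, hwy⟩ : w ≠ x ∧ w ≠ y := by
    obtain ⟨_, _, _, _, _, h1, h2⟩ := mem_Z.1 hw; exact ⟨h1, h2⟩
  have huw : u ≠ w := by
    rintro rfl
    exact (Finset.disjoint_left.1 (Z_disj hT hxy hjk)) hu hw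
  obtain ⟨B, hBT, hBu, hBw⟩ := hB
  have hpos : 0 < ((T i).filter (fun B => u ∈ B ∧ w ∈ B)).card :=
    card_pos.2 ⟨B, mem_filter.2 ⟨hBT, hBu, hBw⟩⟩
  rw [bal hT huw i j] at hpos
  obtain ⟨C, hC⟩ := card_pos.1 hpos
  rw [mem_filter] at hC
  obtain ⟨hCT, hCu, hCw⟩ := hC
  have hCc := hT.blockCard j C hCT
  have hxC : x ∉ C := by
    intro hx
    by_cases hy : y ∈ C
    · exact no_four hCc hx hy hCu hCw hxy (Ne.symm hux) (Ne.symm hwx) (Ne.symm huy)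
        (Ne.symm hwy) huw
    · -- C is an x-block of T j; its non-x points lie in Z_i ∪ Z_k
      obtain ⟨B1, B2, hne, hPx, _, hUeq, _, _⟩ :=
        struct hT hxy hr hp (i := j) (j := i) (k := k) hij.symm hjk hik
      have hCmem : C ∈ ({B1, B2} : Finset (Finset ℕ)) := by
        rw [← hPx]; exact mem_filter.2 ⟨hCT, hx, hy⟩
      have huU : u ∈ B1.erase x ∪ B2.erase x := by
        rw [mem_insert, mem_singleton] at hCmem
        rcases hCmem with rfl | rfl
        · exact mem_union_left _ (mem_erase.2 ⟨hux, hCu⟩)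
        · exact mem_union_right _ (mem_erase.2 ⟨hux, hCu⟩)
      rw [hUeq, mem_union] at huU
      rcases huU with h | h
      · exact (Finset.disjoint_left.1 (Z_disj hT hxy hij.symm)) hu h
      · exact (Finset.disjoint_left.1 (Z_disj hT hxy hjk)) hu h
  refine ⟨C, hCT, hCu, hCw, hxC, fun hy => ?_⟩
  exact eq_triple hCc hy hCu hCw (Ne.symm huy) (Ne.symm hwy) huw

/-- A mixed pair must lie in a block of T j avoiding both x and y. -/
lemma mixedS (hT : IsTrade 3 v 3 2 7 V T) {x y : ℕ} (hxy : x ≠ y)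
    (hr : ∀ i, ((T i).filter (fun B => x ∈ B ∧ y ∈ B)).card = 2)
    (hp : ∀ i, ((T i).filter (fun B => x ∈ B ∧ y ∉ B)).card = 2)
    (hcase : (∀ i, ((T i).filter (fun B => x ∉ B ∧ y ∈ B)).card = 2) ∨
      (∀ i, ((T i).filter (fun B => x ∉ B ∧ y ∉ B)).card = 0))
    {i j k : Fin 3} (hij : i ≠ j) (hik : i ≠ k) (hjk : j ≠ k)
    {u w : ℕ} (hu : u ∈ Z (T j) x y) (hw : w ∈ Z (T k) x y)
    (hB : ∃ B ∈ T i, u ∈ B ∧ w ∈ B) :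
    ∃ C ∈ T j, u ∈ C ∧ w ∈ C ∧ x ∉ C ∧ y ∉ C := by
  obtain ⟨hux, huy⟩ : u ≠ x ∧ u ≠ y := by
    obtain ⟨_, _, _, _, _, h1, h2⟩ := mem_Z.1 hu; exact ⟨h1, h2⟩
  obtain ⟨C, hCT, hCu, hCw, hxC, hyC⟩ := wit hT hxy hr hp hij hik hjk hu hw hB
  by_cases hy : y ∈ C
  · exfalso
    have hCeq := hyC hy
    rcases hcase with hq2 | hs0
    · -- q = 2 : y-blocks of T j have their non-y points in Z_i ∪ Z_k
      have hr' : ∀ i, ((T i).filter (fun B => y ∈ B ∧ x ∈ B)).card = 2 := by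
        intro m; rw [filter_and_comm]; exact hr m
      have hq2' : ∀ i, ((T i).filter (fun B => y ∈ B ∧ x ∉ B)).card = 2 := by
        intro m; rw [filter_and_comm]; exact hq2 m
      obtain ⟨B1, B2, hne, hPx, _, hUeq, _, _⟩ :=
        struct hT (x := y) (y := x) hxy.symm hr' hq2' (i := j) (j := i) (k := k)
          hij.symm hjk hik
      have hCmem : C ∈ ({B1, B2} : Finset (Finset ℕ)) := by
        rw [← hPx]; exact mem_filter.2 ⟨hCT, hy, hxC⟩
      have huU : u ∈ B1.erase y ∪ B2.erase y := by
        rw [mem_insert, mem_singleton] at hCmem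
        rcases hCmem with rfl | rfl
        · exact mem_union_left _ (mem_erase.2 ⟨huy, hCu⟩)
        · exact mem_union_right _ (mem_erase.2 ⟨huy, hCu⟩)
      rw [hUeq, Z_comm (T i), Z_comm (T k), mem_union] at huU
      rcases huU with h | h
      · exact (Finset.disjoint_left.1 (Z_disj hT hxy hij.symm)) hu h
      · exact (Finset.disjoint_left.1 (Z_disj hT hxy hjk)) hu h
    · -- s = 0 : the symmetric witness in T k must also be {y,u,w}
      obtain ⟨D, hDT, hDw, hDu, hxD, hyD⟩ :=
        wit hT hxy hr hp (i := i) (j := k) (k := j) hik hij hjk.symm hw hu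
          (by obtain ⟨B, h1, h2, h3⟩ := hB; exact ⟨B, h1, h3, h2⟩)
      by_cases hy' : y ∈ D
      · have hDeq := hyD hy'
        have : C = D := by
          rw [hCeq, hDeq, Finset.pair_comm u w]
        exact (Finset.disjoint_left.1 (hT.disj j k hjk)) hCT (this ▸ hDT)
      · have : D ∈ (T k).filter (fun B => x ∉ B ∧ y ∉ B) :=
          mem_filter.2 ⟨hDT, hxD, hy'⟩
        rw [card_eq_zero.1 (hs0 k)] at this
        exact notMem_empty D this
  · exact ⟨C, hCT, hCu, hCw, hxC, hy⟩

/-- Under the structured hypotheses, T i contains the block {x} ∪ Z_k. -/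
lemma conclude (hT : IsTrade 3 v 3 2 7 V T) {x y : ℕ} (hxy : x ≠ y)
    (hr : ∀ i, ((T i).filter (fun B => x ∈ B ∧ y ∈ B)).card = 2)
    (hp : ∀ i, ((T i).filter (fun B => x ∈ B ∧ y ∉ B)).card = 2)
    (hs : ∀ i, ((T i).filter (fun B => x ∉ B ∧ y ∉ B)).card ≤ 1)
    (hcase : (∀ i, ((T i).filter (fun B => x ∉ B ∧ y ∈ B)).card = 2) ∨
      (∀ i, ((T i).filter (fun B => x ∉ B ∧ y ∉ B)).card = 0))
    {i j k : Fin 3} (hij : i ≠ j) (hik : i ≠ k) (hjk : j ≠ k) :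
    insert x (Z (T k) x y) ∈ T i := by
  obtain ⟨B1, B2, hne, hPx, hdisj, hUeq, hc1, hc2⟩ := struct hT hxy hr hp hij hik hjk
  have hB1 : B1 ∈ (T i).filter (fun B => x ∈ B ∧ y ∉ B) := by rw [hPx]; simp
  have hB2 : B2 ∈ (T i).filter (fun B => x ∈ B ∧ y ∉ B) := by rw [hPx]; simp
  rw [mem_filter] at hB1 hB2
  have hZkc : (Z (T k) x y).card = 2 := by rw [Z_card (hT.blockCard k) hxy, hr k]
  have hZjc : (Z (T j) x y).card = 2 := by rw [Z_card (hT.blockCard j) hxy, hr j]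
  -- if some e equals Z k we are done
  have done1 : B1.erase x = Z (T k) x y → insert x (Z (T k) x y) ∈ T i := by
    intro h
    rw [← h, insert_erase hB1.2.1]
    exact hB1.1
  have done2 : B2.erase x = Z (T k) x y → insert x (Z (T k) x y) ∈ T i := by
    intro h
    rw [← h, insert_erase hB2.2.1]
    exact hB2.1
  rcases Finset.eq_empty_or_nonempty (B1.erase x ∩ Z (T j) x y) with h1j | h1j
  · -- e1 ⊆ Z k
    apply done1
    apply eq_of_subset_of_card_le
    · intro z hz
      have hzU : z ∈ Z (T j) x y ∪ Z (T k) x y := by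
        rw [← hUeq]; exact mem_union_left _ hz
      rw [mem_union] at hzU
      rcases hzU with h | h
      · exact absurd (mem_inter.2 ⟨hz, h⟩) (by rw [h1j]; exact notMem_empty z)
      · exact h
    · omega
  rcases Finset.eq_empty_or_nonempty (B1.erase x ∩ Z (T k) x y) with h1k | h1k
  · -- e1 ⊆ Z j, hence e1 = Z j, hence e2 = Z k
    have he1 : B1.erase x = Z (T j) x y := by
      apply eq_of_subset_of_card_le
      · intro z hz
        have hzU : z ∈ Z (T j) x y ∪ Z (T k) x y := by
          rw [← hUeq]; exact mem_union_left _ hz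
        rw [mem_union] at hzU
        rcases hzU with h | h
        · exact h
        · exact absurd (mem_inter.2 ⟨hz, h⟩) (by rw [h1k]; exact notMem_empty z)
      · omega
    apply done2
    apply eq_of_subset_of_card_le
    · intro z hz
      have hzU : z ∈ Z (T j) x y ∪ Z (T k) x y := by
        rw [← hUeq]; exact mem_union_right _ hz
      rw [mem_union] at hzU
      rcases hzU with h | h
      · rw [← he1] at h
        exact absurd hz (Finset.disjoint_left.1 hdisj h)
      · exact h
    · omega
  · -- both intersections nonempty: e1 is mixed, and so is e2; contradiction
    exfalso
    obtain ⟨u1, hu1⟩ := h1j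
    obtain ⟨w1, hw1⟩ := h1k
    rw [mem_inter] at hu1 hw1
    -- e2 also meets Z j
    have hZjne1 : ¬ Z (T j) x y ⊆ B1.erase x := by
      intro hsub
      have : Z (T j) x y = B1.erase x := eq_of_subset_of_card_le hsub (by omega)
      have hw1j : w1 ∈ Z (T j) x y := by rw [this]; exact hw1.1
      exact (Finset.disjoint_left.1 (Z_disj hT hxy hjk)) hw1j hw1.2
    have hZkne1 : ¬ Z (T k) x y ⊆ B1.erase x := by
      intro hsub
      have : Z (T k) x y = B1.erase x := eq_of_subset_of_card_le hsub (by omega)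
      have hu1k : u1 ∈ Z (T k) x y := by rw [this]; exact hu1.1
      exact (Finset.disjoint_left.1 (Z_disj hT hxy hjk)) hu1.2 hu1k
    obtain ⟨u2, hu2Z, hu2e1⟩ := not_subset.1 hZjne1
    obtain ⟨w2, hw2Z, hw2e1⟩ := not_subset.1 hZkne1
    have hu2 : u2 ∈ B2.erase x := by
      have : u2 ∈ B1.erase x ∪ B2.erase x := by
        rw [hUeq]; exact mem_union_left _ hu2Z
      rw [mem_union] at this; tauto
    have hw2 : w2 ∈ B2.erase x := by
      have : w2 ∈ B1.erase x ∪ B2.erase x := by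
        rw [hUeq]; exact mem_union_right _ hw2Z
      rw [mem_union] at this; tauto
    -- apply mixedS to both pairs
    obtain ⟨C1, hC1T, hC1u, hC1w, hC1x, hC1y⟩ :=
      mixedS hT hxy hr hp hcase hij hik hjk hu1.2 hw1.2
        ⟨B1, hB1.1, mem_of_mem_erase hu1.1, mem_of_mem_erase hw1.1⟩
    obtain ⟨C2, hC2T, hC2u, hC2w, hC2x, hC2y⟩ :=
      mixedS hT hxy hr hp hcase hij hik hjk hu2Z hw2Z
        ⟨B2, hB2.1, mem_of_mem_erase hu2, mem_of_mem_erase hw2⟩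
    have hCeq : C1 = C2 := by
      apply card_le_one.1 (hs j) <;> rw [mem_filter]
      · exact ⟨hC1T, hC1x, hC1y⟩
      · exact ⟨hC2T, hC2x, hC2y⟩
    -- four distinct points in C1
    have hd12 : ∀ a ∈ B1.erase x, ∀ b ∈ B2.erase x, a ≠ b := by
      intro a ha b hb hab
      subst hab
      exact (Finset.disjoint_left.1 hdisj) ha hb
    have hjkd := Finset.disjoint_left.1 (Z_disj hT hxy hjk)
    refine no_four (hT.blockCard j C1 hC1T) hC1u hC1w (hCeq ▸ hC2u) (hCeq ▸ hC2w)
      ?_ ?_ ?_ ?_ ?_ ?_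
    · rintro rfl; exact hjkd hu1.2 hw1.2
    · exact hd12 u1 hu1.1 u2 hu2
    · exact hd12 u1 hu1.1 w2 hw2
    · exact hd12 w1 hw1.1 u2 hu2
    · exact hd12 w1 hw1.1 w2 hw2
    · rintro rfl; exact hjkd hu2Z hw2Z

/-- The key contradiction lemma. -/
lemma keyFalse (hT : IsTrade 3 v 3 2 7 V T) {x y : ℕ} (hxy : x ≠ y)
    (hr : ∀ i, ((T i).filter (fun B => x ∈ B ∧ y ∈ B)).card = 2)
    (hp : ∀ i, ((T i).filter (fun B => x ∈ B ∧ y ∉ B)).card = 2)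
    (hs : ∀ i, ((T i).filter (fun B => x ∉ B ∧ y ∉ B)).card ≤ 1)
    (hcase : (∀ i, ((T i).filter (fun B => x ∉ B ∧ y ∈ B)).card = 2) ∨
      (∀ i, ((T i).filter (fun B => x ∉ B ∧ y ∉ B)).card = 0)) : False := by
  have h0 : insert x (Z (T 2) x y) ∈ T 0 :=
    conclude hT hxy hr hp hs hcase (i := 0) (j := 1) (k := 2)
      (by decide) (by decide) (by decide)
  have h1 : insert x (Z (T 2) x y) ∈ T 1 :=
    conclude hT hxy hr hp hs hcase (i := 1) (j := 0) (k := 2)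
      (by decide) (by decide) (by decide)
  exact (Finset.disjoint_left.1 (hT.disj 0 1 (by decide))) h0 h1

/-- No pair can be covered twice in a 3-way (v,3,2) trade of volume 7. -/
lemma no_pair (hT : IsTrade 3 v 3 2 7 V T) {x y : ℕ} (hxy : x ≠ y) (i0 : Fin 3)
    (h2 : 2 ≤ ((T i0).filter (fun B => x ∈ B ∧ y ∈ B)).card) : False := by
  have others : ∀ i : Fin 3, ∃ j k : Fin 3, i ≠ j ∧ i ≠ k ∧ j ≠ k := by decide
  have hrall : ∀ i, ((T i).filter (fun B => x ∈ B ∧ y ∈ B)).card =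
      ((T 0).filter (fun B => x ∈ B ∧ y ∈ B)).card := fun i => bal hT hxy i 0
  have e1 : ∀ m : Fin 3, (T m).filter (fun B => y ∈ B ∧ x ∈ B) =
      (T m).filter (fun B => x ∈ B ∧ y ∈ B) := fun m => filter_and_comm _ _ _
  have e2 : ∀ m : Fin 3, (T m).filter (fun B => y ∈ B ∧ x ∉ B) =
      (T m).filter (fun B => x ∉ B ∧ y ∈ B) := fun m => filter_and_comm _ _ _
  have e3 : ∀ m : Fin 3, (T m).filter (fun B => y ∉ B ∧ x ∉ B) =
      (T m).filter (fun B => x ∉ B ∧ y ∉ B) := fun m => filter_and_comm _ _ _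
  set r := ((T 0).filter (fun B => x ∈ B ∧ y ∈ B)).card with hrdef
  have hr2 : 2 ≤ r := by rw [hrall i0] at h2; exact h2
  have hpge : ∀ i, r ≤ ((T i).filter (fun B => x ∈ B ∧ y ∉ B)).card := by
    intro i
    obtain ⟨j, k, h1, h2, h3⟩ := others i
    have := lower hT hxy h1 h2 h3
    rw [hrall j, hrall k] at this
    omega
  have hqge : ∀ i, r ≤ ((T i).filter (fun B => x ∉ B ∧ y ∈ B)).card := by
    intro i
    obtain ⟨j, k, h1, h2, h3⟩ := others i
    have := lower hT (x := y) (y := x) hxy.symm h1 h2 h3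
    rw [e1 j, e1 k, e2 i, hrall j, hrall k] at this
    omega
  have hpart : ∀ i, r + ((T i).filter (fun B => x ∈ B ∧ y ∉ B)).card
      + ((T i).filter (fun B => x ∉ B ∧ y ∈ B)).card
      + ((T i).filter (fun B => x ∉ B ∧ y ∉ B)).card = 7 := by
    intro i
    have := partition4 (T i) x y
    rw [hT.volume i, hrall i] at this
    omega
  have hr_eq : r = 2 := by
    have h1 := hpge 0
    have h2 := hqge 0
    have h3 := hpart 0
    omega
  -- degrees are constant, hence p and q are constant
  have hp_const : ∀ i, ((T i).filter (fun B => x ∈ B ∧ y ∉ B)).card =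
      ((T 0).filter (fun B => x ∈ B ∧ y ∉ B)).card := by
    intro i
    have hi := split_x (T i) x y
    have h0 := split_x (T 0) x y
    have hd := deg_eq hT x i 0
    rw [hrall i] at hi
    omega
  have hq_const : ∀ i, ((T i).filter (fun B => x ∉ B ∧ y ∈ B)).card =
      ((T 0).filter (fun B => x ∉ B ∧ y ∈ B)).card := by
    intro i
    have hi := split_x (T i) y x
    have h0 := split_x (T 0) y x
    have hd := deg_eq hT y i 0
    rw [e1 i, e2 i, hrall i] at hi
    rw [e1 0, e2 0] at h0
    omega
  set P := ((T 0).filter (fun B => x ∈ B ∧ y ∉ B)).card with hPdef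
  set Q := ((T 0).filter (fun B => x ∉ B ∧ y ∈ B)).card with hQdef
  have hP2 : 2 ≤ P := hr_eq ▸ hpge 0
  have hQ2 : 2 ≤ Q := hr_eq ▸ hqge 0
  have hPQ : P + Q ≤ 5 := by have := hpart 0; omega
  have hr' : ∀ i, ((T i).filter (fun B => x ∈ B ∧ y ∈ B)).card = 2 := by
    intro i; rw [hrall i]; exact hr_eq
  have hs' : ∀ i, ((T i).filter (fun B => x ∉ B ∧ y ∉ B)).card ≤ 1 := by
    intro i
    have := hpart i
    have := hpge i
    have := hqge i
    omega
  by_cases hP : P = 2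
  · have hp' : ∀ i, ((T i).filter (fun B => x ∈ B ∧ y ∉ B)).card = 2 := by
      intro i; rw [hp_const i]; exact hP
    have hcase : (∀ i, ((T i).filter (fun B => x ∉ B ∧ y ∈ B)).card = 2) ∨
        (∀ i, ((T i).filter (fun B => x ∉ B ∧ y ∉ B)).card = 0) := by
      by_cases hQ : Q = 2
      · exact Or.inl (fun i => by rw [hq_const i]; exact hQ)
      · refine Or.inr (fun i => ?_)
        have h3 := hpart i
        have := hp_const i
        have := hq_const i
        omega
    exact keyFalse hT hxy hr' hp' hs' hcase
  · -- P = 3, Q = 2, s = 0 : apply the key lemma with x and y swapped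
    have hP3 : P = 3 := by omega
    have hQ2' : Q = 2 := by have := hpart 0; omega
    have hr'' : ∀ i, ((T i).filter (fun B => y ∈ B ∧ x ∈ B)).card = 2 := by
      intro i; rw [e1 i]; exact hr' i
    have hp'' : ∀ i, ((T i).filter (fun B => y ∈ B ∧ x ∉ B)).card = 2 := by
      intro i; rw [e2 i, hq_const i]; exact hQ2'
    have hs0 : ∀ i, ((T i).filter (fun B => x ∉ B ∧ y ∉ B)).card = 0 := by
      intro i
      have h3 := hpart i
      have := hp_const i
      have := hq_const i
      omega
    have hs'' : ∀ i, ((T i).filter (fun B => y ∉ B ∧ x ∉ B)).card ≤ 1 := by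
      intro i; rw [e3 i]; exact hs' i
    have hcase'' : (∀ i, ((T i).filter (fun B => y ∉ B ∧ x ∈ B)).card = 2) ∨
        (∀ i, ((T i).filter (fun B => y ∉ B ∧ x ∉ B)).card = 0) :=
      Or.inr (fun i => by rw [e3 i]; exact hs0 i)
    exact keyFalse hT (x := y) (y := x) hxy.symm hr'' hp'' hs'' hcase''

end Vol7Aux

/-- Every 3-way (v,3,2) trade of volume 7 is a Steiner trade. -/
theorem volume_seven_is_steiner (v : ℕ) (V : Finset ℕ)
    (T : Fin 3 → Finset (Finset ℕ)) (hT : IsTrade 3 v 3 2 7 V T) :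
    IsSteinerTrade 3 v 3 2 7 V T := by
  refine ⟨hT, ?_⟩
  intro S hS i
  by_contra hcon
  push_neg at hcon
  obtain ⟨x, y, hxy, rfl⟩ := Finset.card_eq_two.1 hS
  rw [Vol7Aux.blocksContaining_pair] at hcon
  exact Vol7Aux.no_pair hT hxy i hcon
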